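/- Let R be a commutative Noetherian ring, M a finitely generated R-module, and S a commutative R-algebra that is faithfully flat as an R-module. If M ⊗_R S is reflexive over S, i.e. the natural evaluation map (M ⊗_R S) → Hom_S(Hom_S(M ⊗_R S, S), S) is bijective, then M is reflexive over R, i.e. the natural evaluation map M → Hom_R(Hom_R(M, R), R) is bijective. -/

import Mathlib

open TensorProduct LinearMap

set_option synthInstance.maxHeartbeats 1000000
set_option maxHeartbeats 1600000

section AlphaDef
variable (R S : Type*) [CommRing R] [CommRing S] [Algebra R S]
variable (N : Type*) [AddCommGroup N] [Module R N]

/-- Auxiliary map sending an `R`-linear functional on `N` to the induced `S`-linear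
functional on `S ⊗[R] N`. -/
noncomputable def dualAux : Module.Dual R N →ₗ[R] Module.Dual S (S ⊗[R] N) :=
  (LinearMap.restrictScalars R
      (TensorProduct.AlgebraTensorModule.lift.equiv R S S S N S).toLinearMap) ∘ₗ
  (LinearMap.restrictScalars R
      (LinearMap.ringLmapEquivSelf S S (N →ₗ[R] S)).symm.toLinearMap) ∘ₗ
  (LinearMap.llcomp R N R S (Algebra.linearMap R S))

/-- The natural base change map `S ⊗[R] N^* → (S ⊗[R] N)^*`. -/
noncomputable def alphaN : S ⊗[R] Module.Dual R N →ₗ[S] Module.Dual S (S ⊗[R] N) :=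
  TensorProduct.AlgebraTensorModule.lift (LinearMap.toSpanSingleton S _ (dualAux R S N))

@[simp] lemma alphaN_tmul (s t : S) (f : Module.Dual R N) (n : N) :
    alphaN R S N (s ⊗ₜ f) (t ⊗ₜ n) = s * (t * algebraMap R S (f n)) := by
  simp [alphaN, dualAux, TensorProduct.AlgebraTensorModule.lift.equiv,
    LinearMap.toSpanSingleton]

variable {N} in
/-- Naturality of `alphaN`. -/
lemma alphaN_natural {N' : Type*} [AddCommGroup N'] [Module R N'] (f : N →ₗ[R] N')
    (x : S ⊗[R] Module.Dual R N') :
    alphaN R S N ((f.dualMap.lTensor S) x) = (f.baseChange S).dualMap (alphaN R S N' x) := by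
  induction x using TensorProduct.induction_on with
  | zero => simp
  | add a b ha hb => simp [ha, hb]
  | tmul s g =>
      apply LinearMap.ext
      intro y
      induction y using TensorProduct.induction_on with
      | zero => simp
      | add a b ha hb => simp_all
      | tmul t n => simp

lemma alphaN_bijective_free (n : ℕ) :
    Function.Bijective (alphaN R S (Fin n → R)) := by
  classical
  let b : Module.Basis (Fin n) R (Fin n → R) := Pi.basisFun R (Fin n)
  let b1 : Module.Basis (Fin n) S (S ⊗[R] Module.Dual R (Fin n → R)) := b.dualBasis.baseChange S
  let b2 : Module.Basis (Fin n) S (Module.Dual S (S ⊗[R] (Fin n → R))) := (b.baseChange S).dualBasis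
  have key : alphaN R S (Fin n → R) = (b1.equiv b2 (Equiv.refl _) : _ ≃ₗ[S] _) := by
    apply b1.ext
    intro i
    rw [LinearEquiv.coe_coe, Module.Basis.equiv_apply, Equiv.refl_apply]
    apply (b.baseChange S).ext
    intro j
    have h2 : b2 i ((b.baseChange S) j) = if j = i then (1 : S) else 0 :=
      Module.Basis.dualBasis_apply_self _ _ _
    rw [h2]
    have h1 : b1 i = (1 : S) ⊗ₜ[R] b.dualBasis i := Module.Basis.baseChange_apply ..
    have h3 : (b.baseChange S) j = (1 : S) ⊗ₜ[R] b j := Module.Basis.baseChange_apply ..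
    rw [h1, h3, alphaN_tmul, Module.Basis.dualBasis_apply_self]
    simp [apply_ite (algebraMap R S)]
  rw [key]
  exact (b1.equiv b2 (Equiv.refl _)).bijective
end AlphaDef

section AlphaBij
variable (R S : Type*) [CommRing R] [IsNoetherianRing R] [CommRing S] [Algebra R S]
  [Module.Flat R S]
variable (N : Type*) [AddCommGroup N] [Module R N] [Module.Finite R N]

lemma alphaN_bijective : Function.Bijective (alphaN R S N) := by
  classical
  obtain ⟨n, p, hp⟩ := Module.Finite.exists_fin' R N
  have : Module.Finite R (LinearMap.ker p) := by
    have : IsNoetherian R (Fin n → R) := inferInstance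
    infer_instance
  obtain ⟨m, q, hq⟩ := Module.Finite.exists_fin' R (LinearMap.ker p)
  set k : (Fin m → R) →ₗ[R] (Fin n → R) := (LinearMap.ker p).subtype ∘ₗ q with hkdef
  have hrange : LinearMap.range k = LinearMap.ker p := by
    rw [hkdef, LinearMap.range_comp, LinearMap.range_eq_top.mpr hq, Submodule.map_top,
      Submodule.range_subtype]
  have hexact : Function.Exact k p := LinearMap.exact_iff.mpr hrange.symm
  have hpk : p ∘ₗ k = 0 := LinearMap.ext fun x => hexact.apply_apply_eq_zero x
  -- exactness of the dual sequence
  have hdual : Function.Exact p.dualMap k.dualMap := by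
    rw [LinearMap.exact_iff]
    apply le_antisymm
    · intro g hg
      rw [LinearMap.mem_ker] at hg
      have hker : LinearMap.ker p ≤ LinearMap.ker g := by
        rw [← hrange]
        rintro _ ⟨y, rfl⟩
        simpa using congrFun (congrArg DFunLike.coe hg) y
      let e := p.quotKerEquivOfSurjective hp
      refine ⟨((LinearMap.ker p).liftQ g hker) ∘ₗ (e.symm : N →ₗ[R] _), ?_⟩
      apply LinearMap.ext
      intro x
      have he : e.symm (p x) = Submodule.Quotient.mk x := by
        rw [LinearEquiv.symm_apply_eq]
        simp [e, LinearMap.quotKerEquivOfSurjective]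
      simp [he]
    · rintro _ ⟨f, rfl⟩
      rw [LinearMap.mem_ker]
      apply LinearMap.ext
      intro x
      simp [hexact.apply_apply_eq_zero x]
  have ex1 := Module.Flat.lTensor_exact S hdual
  have inj1 : Function.Injective (p.dualMap.lTensor S) :=
    Module.Flat.lTensor_preserves_injective_linearMap _
      (LinearMap.dualMap_injective_of_surjective hp)
  have hP : Function.Surjective (p.baseChange S) := by
    rw [LinearMap.baseChange_eq_ltensor]
    exact LinearMap.lTensor_surjective S hp
  have hPK : (p.baseChange S) ∘ₗ (k.baseChange S) = 0 := by
    rw [← LinearMap.baseChange_comp, hpk]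
    ext x
    simp
  have hinj : Function.Injective ((p.baseChange S).dualMap) :=
    LinearMap.dualMap_injective_of_surjective hP
  constructor
  · intro x y hxy
    apply inj1
    apply (alphaN_bijective_free R S n).injective
    rw [alphaN_natural, alphaN_natural, hxy]
  · intro y
    obtain ⟨x, hx⟩ := (alphaN_bijective_free R S n).surjective ((p.baseChange S).dualMap y)
    have hx0 : (k.dualMap.lTensor S) x = 0 := by
      apply (alphaN_bijective_free R S m).injective
      rw [alphaN_natural, hx, map_zero]
      show (y ∘ₗ (p.baseChange S)) ∘ₗ (k.baseChange S) = 0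
      rw [LinearMap.comp_assoc, hPK, LinearMap.comp_zero]
    obtain ⟨w, hw⟩ := (ex1 x).mp hx0
    refine ⟨w, ?_⟩
    apply hinj
    rw [← alphaN_natural, hw, hx]
end AlphaBij

section Descent
variable (R S : Type*) [CommRing R] [CommRing S] [Algebra R S] [Module.FaithfullyFlat R S]
variable {N N' : Type*} [AddCommGroup N] [Module R N] [AddCommGroup N'] [Module R N']

lemma ff_descend_injective (f : N →ₗ[R] N') (hf : Function.Injective (f.lTensor S)) :
    Function.Injective f := by
  rw [← LinearMap.ker_eq_bot, eq_bot_iff]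
  intro x hx
  have hx0 : f x = 0 := hx
  have h1 : f ∘ₗ LinearMap.toSpanSingleton R N x = 0 := by
    apply LinearMap.ext
    intro r
    simp [LinearMap.toSpanSingleton_apply, map_smul, hx0]
  have h2 : (f.lTensor S) ∘ₗ ((LinearMap.toSpanSingleton R N x).lTensor S) = 0 := by
    rw [← LinearMap.lTensor_comp, h1, LinearMap.lTensor_zero]
  have h3 : (LinearMap.toSpanSingleton R N x).lTensor S = 0 := by
    apply LinearMap.ext
    intro y
    simp only [LinearMap.zero_apply]
    apply hf
    rw [map_zero]
    simpa using LinearMap.ext_iff.mp h2 y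
  have h4 : LinearMap.toSpanSingleton R N x = 0 :=
    (Module.FaithfullyFlat.zero_iff_lTensor_zero (R := R) (M := S) _).mpr h3
  have h5 := LinearMap.ext_iff.mp h4 (1 : R)
  simp only [LinearMap.toSpanSingleton_apply, one_smul, LinearMap.zero_apply] at h5
  simpa using h5

lemma ff_descend_surjective (f : N →ₗ[R] N') (hf : Function.Surjective (f.lTensor S)) :
    Function.Surjective f := by
  have h1 : (LinearMap.range f).mkQ ∘ₗ f = 0 := LinearMap.range_mkQ_comp f
  have h2 : ((LinearMap.range f).mkQ.lTensor S) ∘ₗ (f.lTensor S) = 0 := by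
    rw [← LinearMap.lTensor_comp, h1, LinearMap.lTensor_zero]
  have h3 : (LinearMap.range f).mkQ.lTensor S = 0 := by
    apply LinearMap.ext
    intro y
    obtain ⟨z, rfl⟩ := hf y
    simpa using LinearMap.ext_iff.mp h2 z
  have h4 : (LinearMap.range f).mkQ = 0 :=
    (Module.FaithfullyFlat.zero_iff_lTensor_zero (R := R) (M := S) _).mpr h3
  intro x
  have : (LinearMap.range f).mkQ x = 0 := by rw [h4]; rfl
  rwa [Submodule.mkQ_apply, Submodule.Quotient.mk_eq_zero, LinearMap.mem_range] at this
end Descent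

/-- If `R` is Noetherian, `M` a finitely generated `R`-module, and `S` a faithfully flat
commutative `R`-algebra, then reflexivity of `S ⊗_R M` over `S` (bijectivity of the
evaluation map into the double dual) implies reflexivity of `M` over `R`. -/
theorem stmt2 (R S M : Type*) [CommRing R] [IsNoetherianRing R] [CommRing S] [Algebra R S]
    [Module.FaithfullyFlat R S] [AddCommGroup M] [Module R M] [Module.Finite R M]
    (h : Function.Bijective (Module.Dual.eval S (S ⊗[R] M))) :
    Function.Bijective (Module.Dual.eval R M) := by
  classical
  -- the dual module is finitely generated
  haveI hDualFin : Module.Finite R (Module.Dual R M) := by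
    obtain ⟨n, p, hp⟩ := Module.Finite.exists_fin' R M
    exact Module.Finite.of_injective p.dualMap (LinearMap.dualMap_injective_of_surjective hp)
  -- the commuting square
  have key : ∀ x : S ⊗[R] M,
      alphaN R S (Module.Dual R M) ((Module.Dual.eval R M).lTensor S x) =
        (alphaN R S M).dualMap (Module.Dual.eval S (S ⊗[R] M) x) := by
    intro x
    induction x using TensorProduct.induction_on with
    | zero => simp
    | add a b ha hb => simp [ha, hb]
    | tmul s m =>
        apply LinearMap.ext
        intro y
        induction y using TensorProduct.induction_on with
        | zero => simp
        | add a b ha hb => simp_all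
        | tmul t f =>
            simp only [LinearMap.lTensor_tmul, alphaN_tmul, LinearMap.dualMap_apply,
              Module.Dual.eval_apply]
            ring
  have hb1 := alphaN_bijective R S M
  have hb2 := alphaN_bijective R S (Module.Dual R M)
  -- bijectivity of the dual of `alphaN R S M`
  have hd : Function.Bijective ((alphaN R S M).dualMap) := by
    let e := LinearEquiv.ofBijective (alphaN R S M) hb1
    constructor
    · exact LinearMap.dualMap_injective_of_surjective hb1.2
    · intro φ
      refine ⟨φ ∘ₗ (e.symm : _ →ₗ[S] _), ?_⟩
      apply LinearMap.ext
      intro x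
      have : e.symm (alphaN R S M x) = x := e.symm_apply_apply x
      simp [LinearMap.dualMap_apply, this]
  have hcomp : Function.Bijective
      (⇑(alphaN R S (Module.Dual R M)) ∘ ⇑((Module.Dual.eval R M).lTensor S)) := by
    have : ⇑(alphaN R S (Module.Dual R M)) ∘ ⇑((Module.Dual.eval R M).lTensor S)
        = ⇑((alphaN R S M).dualMap) ∘ ⇑(Module.Dual.eval S (S ⊗[R] M)) := funext key
    rw [this]
    exact hd.comp h
  have hΦ : Function.Bijective ((Module.Dual.eval R M).lTensor S) :=
    (Function.Bijective.of_comp_iff' hb2 _).mp hcomp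
  exact ⟨ff_descend_injective R S _ hΦ.1, ff_descend_surjective R S _ hΦ.2⟩
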